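/- Let (Ω, μ) be a measure space and let p_A, p_B : Ω → ℝ be measurable functions that are strictly positive μ-almost everywhere and satisfy ∫ p_A dμ = ∫ p_B dμ = 1. For a measurable function F : Ω → ℝ define the logistic classification loss L(F) = −∫ p_A(x) log σ(F(x)) dμ(x) − ∫ p_B(x) log(1 − σ(F(x))) dμ(x), where σ(u) = 1/(1 + exp(−u)) is the logistic sigmoid (both integrands are nonnegative, so L(F) is well defined in [0, ∞]). Then for every measurable F : Ω → ℝ, L(F) ≥ L(F*), where F*(x) = log p_A(x) − log p_B(x). -/

import Mathlib

open MeasureTheory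
open scoped ENNReal

/-- The logistic sigmoid `σ(u) = 1 / (1 + exp (-u))`. -/
noncomputable def sigmoid (u : ℝ) : ℝ := 1 / (1 + Real.exp (-u))

/-- The logistic classification loss
`L(F) = −∫ p_A log σ(F) dμ − ∫ p_B log (1 − σ(F)) dμ`, valued in `[0, ∞]`
(both integrands are nonnegative, so we use lower integrals of their
nonnegative parts). -/
noncomputable def logisticLoss {Ω : Type*} [MeasurableSpace Ω] (μ : Measure Ω)
    (pA pB F : Ω → ℝ) : ℝ≥0∞ :=
  (∫⁻ x, ENNReal.ofReal (-(pA x * Real.log (sigmoid (F x)))) ∂μ)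
    + ∫⁻ x, ENNReal.ofReal (-(pB x * Real.log (1 - sigmoid (F x)))) ∂μ

lemma sigmoid_pos (u : ℝ) : 0 < sigmoid u := by
  unfold sigmoid; positivity

lemma sigmoid_lt_one (u : ℝ) : sigmoid u < 1 := by
  unfold sigmoid
  rw [div_lt_one (by positivity)]
  linarith [Real.exp_pos (-u)]

lemma measurable_sigmoid : Measurable sigmoid := by
  unfold sigmoid; fun_prop

lemma sigmoid_log_div {a b : ℝ} (ha : 0 < a) (hb : 0 < b) :
    sigmoid (Real.log a - Real.log b) = a / (a + b) := by
  unfold sigmoid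
  rw [neg_sub, Real.exp_sub, Real.exp_log hb, Real.exp_log ha]
  field_simp

lemma pointwise_min (a b u : ℝ) (ha : 0 < a) (hb : 0 < b) :
    a * Real.log (sigmoid u) + b * Real.log (1 - sigmoid u)
      ≤ a * Real.log (a / (a + b)) + b * Real.log (b / (a + b)) := by
  set s := sigmoid u with hsdef
  have hs0 : 0 < s := sigmoid_pos u
  have hs1 : s < 1 := sigmoid_lt_one u
  have ht0 : 0 < 1 - s := by linarith
  have hab : 0 < a + b := by linarith
  have h1 : Real.log (s * (a + b) / a) ≤ s * (a + b) / a - 1 :=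
    Real.log_le_sub_one_of_pos (by positivity)
  have h2 : Real.log ((1 - s) * (a + b) / b) ≤ (1 - s) * (a + b) / b - 1 :=
    Real.log_le_sub_one_of_pos (by positivity)
  have e1 : Real.log (s * (a + b) / a) = Real.log s + Real.log (a + b) - Real.log a := by
    rw [Real.log_div (by positivity) ha.ne', Real.log_mul hs0.ne' hab.ne']
  have e2 : Real.log ((1 - s) * (a + b) / b)
      = Real.log (1 - s) + Real.log (a + b) - Real.log b := by
    rw [Real.log_div (by positivity) hb.ne', Real.log_mul ht0.ne' hab.ne']
  have e3 : Real.log (a / (a + b)) = Real.log a - Real.log (a + b) := Real.log_div ha.ne' hab.ne'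
  have e4 : Real.log (b / (a + b)) = Real.log b - Real.log (a + b) := Real.log_div hb.ne' hab.ne'
  have k1 : a * (s * (a + b) / a) = s * (a + b) := by field_simp
  have k2 : b * ((1 - s) * (a + b) / b) = (1 - s) * (a + b) := by field_simp
  have m1 : a * Real.log (s * (a + b) / a) ≤ a * (s * (a + b) / a - 1) :=
    mul_le_mul_of_nonneg_left h1 ha.le
  have m2 : b * Real.log ((1 - s) * (a + b) / b) ≤ b * ((1 - s) * (a + b) / b - 1) :=
    mul_le_mul_of_nonneg_left h2 hb.le
  rw [e1] at m1; rw [e2] at m2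
  nlinarith [m1, m2, k1, k2]

/-- The optimal logistic classifier between densities `p_A` and `p_B` is
`F*(x) = log p_A(x) − log p_B(x)`: every measurable `F` has at least as
large a logistic loss. -/
theorem logisticLoss_le_of_optimal
    {Ω : Type*} [MeasurableSpace Ω] (μ : Measure Ω)
    (pA pB : Ω → ℝ) (hpA : Measurable pA) (hpB : Measurable pB)
    (hpApos : ∀ᵐ x ∂μ, 0 < pA x) (hpBpos : ∀ᵐ x ∂μ, 0 < pB x)
    (hpAint : ∫ x, pA x ∂μ = 1) (hpBint : ∫ x, pB x ∂μ = 1)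
    (F : Ω → ℝ) (hF : Measurable F) :
    logisticLoss μ pA pB (fun x => Real.log (pA x) - Real.log (pB x))
      ≤ logisticLoss μ pA pB F := by
  have combine : ∀ G : Ω → ℝ, Measurable G →
      logisticLoss μ pA pB G = ∫⁻ x, ENNReal.ofReal
        (-(pA x * Real.log (sigmoid (G x))) + -(pB x * Real.log (1 - sigmoid (G x)))) ∂μ := by
    intro G hG
    have hmeas : Measurable fun x => ENNReal.ofReal (-(pA x * Real.log (sigmoid (G x)))) := by
      apply ENNReal.measurable_ofReal.comp
      exact (hpA.mul (Real.measurable_log.comp (measurable_sigmoid.comp hG))).neg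
    unfold logisticLoss
    rw [← lintegral_add_left hmeas]
    apply lintegral_congr_ae
    filter_upwards [hpApos, hpBpos] with x hA hB
    have hlog1 : Real.log (sigmoid (G x)) ≤ 0 :=
      Real.log_nonpos (sigmoid_pos _).le (sigmoid_lt_one _).le
    have hlog2 : Real.log (1 - sigmoid (G x)) ≤ 0 :=
      Real.log_nonpos (by linarith [sigmoid_lt_one (G x)]) (by linarith [sigmoid_pos (G x)])
    rw [← ENNReal.ofReal_add
      (neg_nonneg.mpr (mul_nonpos_of_nonneg_of_nonpos hA.le hlog1))
      (neg_nonneg.mpr (mul_nonpos_of_nonneg_of_nonpos hB.le hlog2))]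
  have hFs : Measurable fun x => Real.log (pA x) - Real.log (pB x) :=
    (Real.measurable_log.comp hpA).sub (Real.measurable_log.comp hpB)
  rw [combine _ hFs, combine _ hF]
  apply lintegral_mono_ae
  filter_upwards [hpApos, hpBpos] with x hA hB
  apply ENNReal.ofReal_le_ofReal
  have hsig : sigmoid (Real.log (pA x) - Real.log (pB x)) = pA x / (pA x + pB x) :=
    sigmoid_log_div hA hB
  have h1sig : 1 - sigmoid (Real.log (pA x) - Real.log (pB x)) = pB x / (pA x + pB x) := by
    rw [hsig]; field_simp; ring
  have hmin := pointwise_min (pA x) (pB x) (F x) hA hB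
  have h2 : (1:ℝ) - pA x / (pA x + pB x) = pB x / (pA x + pB x) := by field_simp; ring
  simp only [hsig, h2]
  linarith
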